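/- arXiv:2108.04356 — 4 statements merged into one kernel-verified Lean document; each statement's English description precedes it below -/
import Mathlib

section
/- Let f : ℝ² → ℍ be integrable. Then for all x1, x2 ∈ ℝ and all s1, s2 > 0, the filtered signal f_Q satisfies the left Cauchy–Riemann equation in the pair (x1, s1): (∂/∂x1) f_Q(x1,x2,s1,s2) + i · (∂/∂s1) f_Q(x1,x2,s1,s2) = 0. -/
open MeasureTheory Real Filter
open scoped Quaternion ENNReal

/-- The quaternion imaginary unit `i`. -/
noncomputable def qi : ℍ[ℝ] := ⟨0, 1, 0, 0⟩

/-- The quaternion imaginary unit `j`. -/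
noncomputable def qj : ℍ[ℝ] := ⟨0, 0, 1, 0⟩

/-- `exp (i t) = cos t + i sin t` as a quaternion. -/
noncomputable def expI (t : ℝ) : ℍ[ℝ] := ⟨Real.cos t, Real.sin t, 0, 0⟩

/-- `exp (j t) = cos t + j sin t` as a quaternion. -/
noncomputable def expJ (t : ℝ) : ℍ[ℝ] := ⟨Real.cos t, 0, Real.sin t, 0⟩

/-- The two-sided quaternion Fourier transform of `f : ℝ² → ℍ`:
`F[f](w₁,w₂) = (1/(2π)) ∫ exp(-i w₁ x₁) f(x) exp(-j w₂ x₂) dx`. -/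
noncomputable def QFT (f : ℝ × ℝ → ℍ[ℝ]) (w₁ w₂ : ℝ) : ℍ[ℝ] :=
  (1 / (2 * π)) • ∫ x : ℝ × ℝ, expI (-(w₁ * x.1)) * f x * expJ (-(w₂ * x.2))

/-- The quaternion Hardy filter system function
`H₃(w₁,w₂,s₁,s₂) = e^{-|w₁|s₁} e^{-|w₂|s₂} (1+sgn w₁)(1+sgn w₂)`. -/
noncomputable def H3 (w₁ w₂ s₁ s₂ : ℝ) : ℝ :=
  Real.exp (-|w₁| * s₁) * Real.exp (-|w₂| * s₂) * (1 + Real.sign w₁) * (1 + Real.sign w₂)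

/-- The filtered signal `f_Q(x₁,x₂,s₁,s₂) =
(1/(2π)) ∫ exp(i w₁ x₁) H₃(w₁,w₂,s₁,s₂) F[f](w₁,w₂) exp(j w₂ x₂) dw`. -/
noncomputable def fQ (f : ℝ × ℝ → ℍ[ℝ]) (x₁ x₂ s₁ s₂ : ℝ) : ℍ[ℝ] :=
  (1 / (2 * π)) • ∫ w : ℝ × ℝ,
    expI (w.1 * x₁) * (H3 w.1 w.2 s₁ s₂ • QFT f w.1 w.2) * expJ (w.2 * x₂)

/-! ### Auxiliary lemmas -/

section Aux
open Set

lemma expI_eq (t : ℝ) : expI t = Real.cos t • (1 : ℍ[ℝ]) + Real.sin t • qi := by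
  ext <;> simp [expI] <;> simp [qi]

lemma expJ_eq (t : ℝ) : expJ t = Real.cos t • (1 : ℍ[ℝ]) + Real.sin t • qj := by
  ext <;> simp [expJ] <;> simp [qj]

lemma continuous_expI : Continuous expI := by
  simp only [funext expI_eq]; fun_prop

lemma continuous_expJ : Continuous expJ := by
  simp only [funext expJ_eq]; fun_prop

lemma norm_expI (t : ℝ) : ‖expI t‖ = 1 := by
  have : ‖expI t‖ ^ 2 = 1 := by
    rw [sq, ← Quaternion.normSq_eq_norm_mul_self]
    rw [Quaternion.normSq_def']; simp [expI, Quaternion.normSq_def', sin_sq_add_cos_sq]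
  nlinarith [norm_nonneg (expI t)]

lemma norm_expJ (t : ℝ) : ‖expJ t‖ = 1 := by
  have : ‖expJ t‖ ^ 2 = 1 := by
    rw [sq, ← Quaternion.normSq_eq_norm_mul_self]
    rw [Quaternion.normSq_def']; simp [expJ, Quaternion.normSq_def', sin_sq_add_cos_sq]
  nlinarith [norm_nonneg (expJ t)]

lemma norm_qi : ‖qi‖ = 1 := by
  have : ‖qi‖ ^ 2 = 1 := by
    rw [sq, ← Quaternion.normSq_eq_norm_mul_self]
    rw [Quaternion.normSq_def']; simp [qi, Quaternion.normSq_def']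
  nlinarith [norm_nonneg qi]

lemma hasDerivAt_expI (w x : ℝ) :
    HasDerivAt (fun t => expI (w * t)) (w • (qi * expI (w * x))) x := by
  have h1 : HasDerivAt (fun t : ℝ => Real.cos (w * t)) (-Real.sin (w * x) * w) x := by
    simpa [Function.comp_def] using (Real.hasDerivAt_cos (w * x)).comp x ((hasDerivAt_id x).const_mul w)
  have h2 : HasDerivAt (fun t : ℝ => Real.sin (w * t)) (Real.cos (w * x) * w) x := by
    simpa [Function.comp_def] using (Real.hasDerivAt_sin (w * x)).comp x ((hasDerivAt_id x).const_mul w)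
  have h := (h1.smul_const (1 : ℍ[ℝ])).add (h2.smul_const qi)
  simp only [funext expI_eq] at h ⊢
  refine h.congr_deriv (Eq.symm ?_)
  have hq : qi * (Real.cos (w*x) • (1:ℍ[ℝ]) + Real.sin (w*x) • qi)
      = (-Real.sin (w*x)) • (1:ℍ[ℝ]) + Real.cos (w*x) • qi := by
    ext <;> simp [Quaternion.re_smul] <;> simp [qi]
  rw [hq]
  module

lemma norm_QFT_le (f : ℝ × ℝ → ℍ[ℝ]) (w₁ w₂ : ℝ) :
    ‖QFT f w₁ w₂‖ ≤ (1 / (2 * π)) * ∫ x : ℝ × ℝ, ‖f x‖ := by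
  rw [QFT, norm_smul]
  rw [Real.norm_eq_abs, abs_of_pos (by positivity)]
  gcongr
  refine (norm_integral_le_integral_norm _).trans (le_of_eq ?_)
  congr 1
  ext x
  rw [norm_mul, norm_mul, norm_expI, norm_expJ, one_mul, mul_one]

lemma continuous_QFT (f : ℝ × ℝ → ℍ[ℝ]) (hf : Integrable f) :
    Continuous fun w : ℝ × ℝ => QFT f w.1 w.2 := by
  apply Continuous.fun_const_smul
  apply continuous_of_dominated (bound := fun x => ‖f x‖)
  · intro w
    exact (((continuous_expI.comp
        ((continuous_const.mul continuous_fst).neg)).aestronglyMeasurable).mul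
      hf.aestronglyMeasurable).mul
      ((continuous_expJ.comp ((continuous_const.mul continuous_snd).neg)).aestronglyMeasurable)
  · intro w
    filter_upwards with x
    rw [norm_mul, norm_mul, norm_expI, norm_expJ, one_mul, mul_one]
  · exact hf.norm
  · filter_upwards with x
    exact ((continuous_expI.comp
        ((continuous_fst.mul continuous_const).neg)).mul continuous_const).mul
      (continuous_expJ.comp ((continuous_snd.mul continuous_const).neg))

lemma integrable_exp_neg_abs' {b : ℝ} (hb : 0 < b) :
    Integrable fun x : ℝ => Real.exp (-|x| * b) := by
  have hIoi : IntegrableOn (fun x : ℝ => Real.exp (-|x| * b)) (Ioi 0) := by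
    refine (exp_neg_integrableOn_Ioi 0 hb).congr_fun ?_ measurableSet_Ioi
    intro x hx
    show Real.exp (-b * x) = Real.exp (-|x| * b)
    rw [abs_of_pos hx]; ring_nf
  rw [← integrableOn_univ, ← Iio_union_Ici (a := (0:ℝ)), integrableOn_union,
    integrableOn_Ici_iff_integrableOn_Ioi]
  refine ⟨?_, hIoi⟩
  rw [← (Measure.measurePreserving_neg (volume : Measure ℝ)).integrableOn_comp_preimage
      (Homeomorph.neg ℝ).measurableEmbedding]
  simpa [Function.comp_def] using hIoi

lemma integrable_abs_mul_exp_neg_abs' {b : ℝ} (hb : 0 < b) :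
    Integrable fun x : ℝ => |x| * Real.exp (-|x| * b) := by
  refine Integrable.mono' (((integrable_exp_neg_abs' (b := b/2) (by linarith)).const_mul (2/b)))
    ((continuous_abs.mul ((continuous_abs.neg.mul continuous_const).rexp)).aestronglyMeasurable) ?_
  filter_upwards with x
  rw [Real.norm_eq_abs, abs_of_nonneg (by positivity)]
  have h1 : |x| ≤ (2/b) * Real.exp (|x| * (b/2)) := by
    rw [← mul_le_mul_iff_right₀ (show (0:ℝ) < b/2 by linarith)]
    have h2 : b/2 * (2/b * Real.exp (|x| * (b/2))) = Real.exp (|x| * (b/2)) := by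
      field_simp
    rw [h2]
    have := Real.add_one_le_exp (|x| * (b/2))
    nlinarith [abs_nonneg x]
  calc |x| * Real.exp (-|x| * b) ≤ ((2/b) * Real.exp (|x| * (b/2))) * Real.exp (-|x| * b) := by
        gcongr
    _ = 2/b * Real.exp (-|x| * (b/2)) := by
        rw [mul_assoc, ← Real.exp_add]; ring_nf

lemma measurable_real_sign : Measurable Real.sign := by
  unfold Real.sign
  exact Measurable.ite (measurableSet_lt measurable_id measurable_const) measurable_const
    (Measurable.ite (measurableSet_lt measurable_const measurable_id) measurable_const
      measurable_const)

lemma abs_one_add_sign_le (u : ℝ) : |1 + Real.sign u| ≤ 2 := by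
  rcases lt_trichotomy u 0 with h | h | h
  · simp [Real.sign_of_neg h]
  · simp [h]
  · rw [Real.sign_of_pos h]; norm_num

lemma abs_H3_le (w₁ w₂ s s₂ : ℝ) :
    |H3 w₁ w₂ s s₂| ≤ 4 * (Real.exp (-|w₁| * s) * Real.exp (-|w₂| * s₂)) := by
  rw [H3, abs_mul, abs_mul, abs_mul, abs_of_pos (Real.exp_pos _), abs_of_pos (Real.exp_pos _)]
  have h1 := abs_one_add_sign_le w₁
  have h2 := abs_one_add_sign_le w₂
  have e1 := Real.exp_pos (-|w₁| * s)
  have e2 := Real.exp_pos (-|w₂| * s₂)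
  nlinarith [abs_nonneg (1 + Real.sign w₁), abs_nonneg (1 + Real.sign w₂),
    mul_pos e1 e2, mul_nonneg (mul_nonneg e1.le e2.le) (abs_nonneg (1 + Real.sign w₁))]

/-- The integrand of `fQ`, as a function of the parameters `t = x₁` and `s = s₁`. -/
noncomputable def Pfun (f : ℝ × ℝ → ℍ[ℝ]) (x₂ s₂ t s : ℝ) (w : ℝ × ℝ) : ℍ[ℝ] :=
  expI (w.1 * t) * (H3 w.1 w.2 s s₂ • QFT f w.1 w.2) * expJ (w.2 * x₂)

lemma sm_Pfun (f : ℝ × ℝ → ℍ[ℝ]) (hf : Integrable f) (x₂ s₂ t s : ℝ) :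
    StronglyMeasurable fun w : ℝ × ℝ => Pfun f x₂ s₂ t s w := by
  have hH3 : Measurable fun w : ℝ × ℝ => H3 w.1 w.2 s s₂ := by
    apply Measurable.mul
    apply Measurable.mul
    apply Measurable.mul
    · exact ((continuous_abs.comp continuous_fst).neg.mul continuous_const).rexp.measurable
    · exact ((continuous_abs.comp continuous_snd).neg.mul continuous_const).rexp.measurable
    · exact measurable_const.add (measurable_real_sign.comp measurable_fst)
    · exact measurable_const.add (measurable_real_sign.comp measurable_snd)
  exact (((continuous_expI.comp (continuous_fst.mul continuous_const)).stronglyMeasurable).mul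
      (hH3.stronglyMeasurable.smul (continuous_QFT f hf).stronglyMeasurable)).mul
    ((continuous_expJ.comp (continuous_snd.mul continuous_const)).stronglyMeasurable)

lemma norm_Pfun_le (f : ℝ × ℝ → ℍ[ℝ]) (x₂ s₂ t s : ℝ) (w : ℝ × ℝ) :
    ‖Pfun f x₂ s₂ t s w‖ ≤
      (4 * ((1 / (2 * π)) * ∫ x : ℝ × ℝ, ‖f x‖)) *
        (Real.exp (-|w.1| * s) * Real.exp (-|w.2| * s₂)) := by
  have hM : (0:ℝ) ≤ (1 / (2 * π)) * ∫ x : ℝ × ℝ, ‖f x‖ := by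
    have : (0:ℝ) ≤ ∫ x : ℝ × ℝ, ‖f x‖ := integral_nonneg fun x => norm_nonneg _
    positivity
  rw [Pfun, norm_mul, norm_mul, norm_expI, norm_expJ, one_mul, mul_one, norm_smul,
    Real.norm_eq_abs]
  calc |H3 w.1 w.2 s s₂| * ‖QFT f w.1 w.2‖
      ≤ (4 * (Real.exp (-|w.1| * s) * Real.exp (-|w.2| * s₂))) *
        ((1 / (2 * π)) * ∫ x : ℝ × ℝ, ‖f x‖) :=
        mul_le_mul (abs_H3_le _ _ _ _) (norm_QFT_le f _ _) (norm_nonneg _) (by positivity)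
    _ = _ := by ring

lemma hasDerivAt_Pfun_t (f : ℝ × ℝ → ℍ[ℝ]) (x₂ s₂ s : ℝ) (w : ℝ × ℝ) (t : ℝ) :
    HasDerivAt (fun t => Pfun f x₂ s₂ t s w) (w.1 • (qi * Pfun f x₂ s₂ t s w)) t := by
  have h := ((hasDerivAt_expI w.1 t).mul_const
      (H3 w.1 w.2 s s₂ • QFT f w.1 w.2)).mul_const (expJ (w.2 * x₂))
  refine h.congr_deriv (Eq.symm ?_)
  simp only [Pfun, smul_mul_assoc, mul_smul_comm, mul_assoc]
  exact smul_comm _ _ _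

lemma hasDerivAt_Pfun_s (f : ℝ × ℝ → ℍ[ℝ]) (x₂ s₂ t : ℝ) (w : ℝ × ℝ) (s : ℝ) :
    HasDerivAt (fun s => Pfun f x₂ s₂ t s w) ((-|w.1|) • Pfun f x₂ s₂ t s w) s := by
  have hH : HasDerivAt (fun s => H3 w.1 w.2 s s₂) (-|w.1| * H3 w.1 w.2 s s₂) s := by
    have h0 : HasDerivAt (fun s : ℝ => -|w.1| * s) (-|w.1|) s := by
      simpa using (hasDerivAt_id s).const_mul (-|w.1|)
    have h1 : HasDerivAt (fun s : ℝ => Real.exp (-|w.1| * s))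
        (Real.exp (-|w.1| * s) * -|w.1|) s := h0.exp
    have h2 := ((h1.mul_const (Real.exp (-|w.2| * s₂))).mul_const
      (1 + Real.sign w.1)).mul_const (1 + Real.sign w.2)
    refine h2.congr_deriv (Eq.symm ?_)
    rw [H3]; ring
  have h := ((hH.smul_const (QFT f w.1 w.2)).const_mul (expI (w.1 * t))).mul_const
    (expJ (w.2 * x₂))
  refine h.congr_deriv (Eq.symm ?_)
  simp only [Pfun, mul_smul, neg_smul, smul_mul_assoc, mul_smul_comm, neg_mul, mul_neg]

lemma Pfun_zero_of_neg (f : ℝ × ℝ → ℍ[ℝ]) (x₂ s₂ t s : ℝ) (w : ℝ × ℝ) (hw : w.1 < 0) :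
    Pfun f x₂ s₂ t s w = 0 := by
  have : H3 w.1 w.2 s s₂ = 0 := by
    rw [H3, Real.sign_of_neg hw]
    ring
  rw [Pfun, this, zero_smul, mul_zero, zero_mul]

lemma key_cancel (f : ℝ × ℝ → ℍ[ℝ]) (x₂ s₂ t s : ℝ) (w : ℝ × ℝ) :
    w.1 • (qi * Pfun f x₂ s₂ t s w) + qi * ((-|w.1|) • Pfun f x₂ s₂ t s w) = 0 := by
  rcases le_or_gt 0 w.1 with h | h
  · rw [abs_of_nonneg h, mul_smul_comm]
    module
  · rw [Pfun_zero_of_neg f x₂ s₂ t s w h]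
    simp

end Aux

/-- For integrable `f : ℝ² → ℍ`, the filtered signal `f_Q` satisfies the
left Cauchy–Riemann equation in the pair `(x₁, s₁)`:
`∂f_Q/∂x₁ + i ∂f_Q/∂s₁ = 0` for all `x₁ x₂` and `s₁, s₂ > 0`. -/
theorem fQ_left_cauchy_riemann (f : ℝ × ℝ → ℍ[ℝ]) (hf : Integrable f)
    (x₁ x₂ s₁ s₂ : ℝ) (hs₁ : 0 < s₁) (hs₂ : 0 < s₂) :
    deriv (fun t => fQ f t x₂ s₁ s₂) x₁ + qi * deriv (fun t => fQ f x₁ x₂ t s₂) s₁ = 0 := by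
  set M : ℝ := (1 / (2 * π)) * ∫ x : ℝ × ℝ, ‖f x‖ with hM
  have hM0 : 0 ≤ M := by
    have : (0:ℝ) ≤ ∫ x : ℝ × ℝ, ‖f x‖ := integral_nonneg fun x => norm_nonneg _
    positivity
  -- integrability of the integrand
  have hPint : Integrable (fun w : ℝ × ℝ => Pfun f x₂ s₂ x₁ s₁ w) := by
    refine Integrable.mono' (g := fun w : ℝ × ℝ =>
        ((4 * M) * Real.exp (-|w.1| * s₁)) * Real.exp (-|w.2| * s₂)) ?_
      (sm_Pfun f hf x₂ s₂ x₁ s₁).aestronglyMeasurable ?_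
    · rw [Measure.volume_eq_prod]
      exact ((integrable_exp_neg_abs' hs₁).const_mul (4 * M)).mul_prod
        (integrable_exp_neg_abs' hs₂)
    · filter_upwards with w
      calc ‖Pfun f x₂ s₂ x₁ s₁ w‖
          ≤ (4 * M) * (Real.exp (-|w.1| * s₁) * Real.exp (-|w.2| * s₂)) :=
            norm_Pfun_le f x₂ s₂ x₁ s₁ w
        _ = _ := by ring
  -- derivative in x₁
  have hD1 := hasDerivAt_integral_of_dominated_loc_of_deriv_le (μ := volume)
    (F := fun t (w : ℝ × ℝ) => Pfun f x₂ s₂ t s₁ w)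
    (F' := fun t (w : ℝ × ℝ) => w.1 • (qi * Pfun f x₂ s₂ t s₁ w))
    (x₀ := x₁)
    (bound := fun w : ℝ × ℝ => ((4 * M) * (|w.1| * Real.exp (-|w.1| * s₁))) *
      Real.exp (-|w.2| * s₂))
    (Metric.ball_mem_nhds x₁ one_pos)
    (Eventually.of_forall fun t => (sm_Pfun f hf x₂ s₂ t s₁).aestronglyMeasurable)
    hPint
    ((continuous_fst.stronglyMeasurable.smul (stronglyMeasurable_const.mul
      (sm_Pfun f hf x₂ s₂ x₁ s₁))).aestronglyMeasurable)
    (by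
      filter_upwards with w t _
      rw [norm_smul, Real.norm_eq_abs, norm_mul, norm_qi, one_mul]
      calc |w.1| * ‖Pfun f x₂ s₂ t s₁ w‖
          ≤ |w.1| * ((4 * M) * (Real.exp (-|w.1| * s₁) * Real.exp (-|w.2| * s₂))) := by
            gcongr
            exact norm_Pfun_le f x₂ s₂ t s₁ w
        _ = _ := by ring)
    (by
      rw [Measure.volume_eq_prod]
      exact ((integrable_abs_mul_exp_neg_abs' hs₁).const_mul (4 * M)).mul_prod
        (integrable_exp_neg_abs' hs₂))
    (by
      filter_upwards with w t _
      exact hasDerivAt_Pfun_t f x₂ s₂ s₁ w t)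
  -- derivative in s₁
  have hD2 := hasDerivAt_integral_of_dominated_loc_of_deriv_le (μ := volume)
    (F := fun s (w : ℝ × ℝ) => Pfun f x₂ s₂ x₁ s w)
    (F' := fun s (w : ℝ × ℝ) => (-|w.1|) • Pfun f x₂ s₂ x₁ s w)
    (x₀ := s₁)
    (bound := fun w : ℝ × ℝ => ((4 * M) * (|w.1| * Real.exp (-|w.1| * (s₁ / 2)))) *
      Real.exp (-|w.2| * s₂))
    (Metric.ball_mem_nhds s₁ (half_pos hs₁))
    (Eventually.of_forall fun s => (sm_Pfun f hf x₂ s₂ x₁ s).aestronglyMeasurable)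
    hPint
    (((continuous_fst.abs.neg.stronglyMeasurable).smul
      (sm_Pfun f hf x₂ s₂ x₁ s₁)).aestronglyMeasurable)
    (by
      filter_upwards with w s hs
      have hs' : s₁ / 2 ≤ s := by
        have := abs_lt.mp (mem_ball_iff_norm.mp hs)
        linarith [this.1]
      rw [norm_smul, Real.norm_eq_abs, abs_neg, abs_abs]
      calc |w.1| * ‖Pfun f x₂ s₂ x₁ s w‖
          ≤ |w.1| * ((4 * M) * (Real.exp (-|w.1| * s) * Real.exp (-|w.2| * s₂))) := by
            gcongr
            exact norm_Pfun_le f x₂ s₂ x₁ s w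
        _ ≤ |w.1| * ((4 * M) * (Real.exp (-|w.1| * (s₁ / 2)) * Real.exp (-|w.2| * s₂))) := by
            have hexp : Real.exp (-|w.1| * s) ≤ Real.exp (-|w.1| * (s₁ / 2)) :=
              Real.exp_le_exp.mpr (by nlinarith [abs_nonneg w.1])
            exact mul_le_mul_of_nonneg_left (mul_le_mul_of_nonneg_left
              (mul_le_mul_of_nonneg_right hexp (Real.exp_pos _).le)
              (by linarith)) (abs_nonneg _)
        _ = _ := by ring)
    (by
      rw [Measure.volume_eq_prod]
      exact ((integrable_abs_mul_exp_neg_abs' (half_pos hs₁)).const_mul (4 * M)).mul_prod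
        (integrable_exp_neg_abs' hs₂))
    (by
      filter_upwards with w s _
      exact hasDerivAt_Pfun_s f x₂ s₂ x₁ w s)
  obtain ⟨hInt1, hDer1⟩ := hD1
  obtain ⟨hInt2, hDer2⟩ := hD2
  -- compute the two derivatives of fQ
  have hfQ1 : deriv (fun t => fQ f t x₂ s₁ s₂) x₁ =
      (1 / (2 * π)) • ∫ w : ℝ × ℝ, w.1 • (qi * Pfun f x₂ s₂ x₁ s₁ w) :=
    (hDer1.const_smul (1 / (2 * π))).deriv
  have hfQ2 : deriv (fun s => fQ f x₁ x₂ s s₂) s₁ =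
      (1 / (2 * π)) • ∫ w : ℝ × ℝ, (-|w.1|) • Pfun f x₂ s₂ x₁ s₁ w :=
    (hDer2.const_smul (1 / (2 * π))).deriv
  rw [hfQ1, hfQ2]
  -- move qi inside the integral
  set L : ℍ[ℝ] →L[ℝ] ℍ[ℝ] := ContinuousLinearMap.mul ℝ ℍ[ℝ] qi with hL
  have hqi_int : qi * (∫ w : ℝ × ℝ, (-|w.1|) • Pfun f x₂ s₂ x₁ s₁ w) =
      ∫ w : ℝ × ℝ, qi * ((-|w.1|) • Pfun f x₂ s₂ x₁ s₁ w) := by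
    have := L.integral_comp_comm hInt2
    simpa [hL, ContinuousLinearMap.mul_apply'] using this.symm
  have hInt1' : Integrable (fun w : ℝ × ℝ => w.1 • (qi * Pfun f x₂ s₂ x₁ s₁ w)) := hInt1
  have h2' : Integrable (fun w : ℝ × ℝ => qi * ((-|w.1|) • Pfun f x₂ s₂ x₁ s₁ w)) := by
    have := L.integrable_comp hInt2
    simpa [hL, ContinuousLinearMap.mul_apply'] using this
  have hsum : (∫ w : ℝ × ℝ, w.1 • (qi * Pfun f x₂ s₂ x₁ s₁ w)) +
      (∫ w : ℝ × ℝ, qi * ((-|w.1|) • Pfun f x₂ s₂ x₁ s₁ w)) = 0 := by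
    rw [← integral_add hInt1' h2']
    simp only [key_cancel f x₂ s₂ x₁ s₁, integral_zero]
  rw [mul_smul_comm, hqi_int, ← smul_add, hsum, smul_zero]
end

section
/- Let H, J, K be real numbers with (H − J)² + 4K² ≠ 0. Set D := √((H − J)² + 4K²), g_max := (H + J + D)/2, and θ_max := sgn(K) · arcsin( √( (g_max − H) / (2·g_max − H − J) ) ), where sgn(K) = 1 if K ≥ 0 and sgn(K) = −1 if K < 0. Then H·cos²θ_max + 2K·cos θ_max·sin θ_max + J·sin²θ_max = g_max; i.e., θ_max maximizes θ ↦ H·cos²θ + 2K·cos θ·sin θ + J·sin²θ over ℝ. -/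
/-- For real `H, J, K` with `(H − J)² + 4K² ≠ 0`, setting
`D = √((H − J)² + 4K²)`, `g_max = (H + J + D)/2` and
`θ_max = sgn(K) · arcsin √((g_max − H)/(2 g_max − H − J))` (with `sgn K = 1` if `K ≥ 0`
and `−1` otherwise), the direction `θ_max` attains the maximum:
`H cos²θ_max + 2K cosθ_max sinθ_max + J sin²θ_max = g_max`. -/
theorem jin_gradient_direction (H J K : ℝ) (h : (H - J) ^ 2 + 4 * K ^ 2 ≠ 0) :
    let D := Real.sqrt ((H - J) ^ 2 + 4 * K ^ 2)
    let gmax := (H + J + D) / 2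
    let θmax := (if 0 ≤ K then (1 : ℝ) else -1) *
      Real.arcsin (Real.sqrt ((gmax - H) / (2 * gmax - H - J)))
    H * Real.cos θmax ^ 2 + 2 * K * Real.cos θmax * Real.sin θmax +
      J * Real.sin θmax ^ 2 = gmax := by
  intro D gmax θmax
  have hnn : (0:ℝ) ≤ (H - J) ^ 2 + 4 * K ^ 2 := by positivity
  have hD2 : D ^ 2 = (H - J) ^ 2 + 4 * K ^ 2 := Real.sq_sqrt hnn
  have hDnn : 0 ≤ D := Real.sqrt_nonneg _
  have hDpos : 0 < D := by
    rcases hDnn.lt_or_eq with h1 | h1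
    · exact h1
    · exfalso; apply h; rw [← hD2, ← h1]; ring
  have habs : |H - J| ≤ D := by
    rw [← Real.sqrt_sq_eq_abs]
    exact Real.sqrt_le_sqrt (by nlinarith)
  have habs' := abs_le.mp habs
  have ht : (gmax - H) / (2 * gmax - H - J) = (D + J - H) / (2 * D) := by
    show ((H + J + D) / 2 - H) / (2 * ((H + J + D) / 2) - H - J) = (D + J - H) / (2 * D)
    rw [show 2 * ((H + J + D) / 2) - H - J = D by ring]
    field_simp
    ring
  set t := (D + J - H) / (2 * D) with htdef
  have ht0 : 0 ≤ t := by
    apply div_nonneg _ (by linarith)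
    linarith [habs'.1]
  have ht1 : t ≤ 1 := by
    rw [div_le_one (by linarith)]
    linarith [habs'.2]
  have h1t : 0 ≤ 1 - t := by linarith
  have hs : Real.sin (Real.arcsin (Real.sqrt t)) = Real.sqrt t :=
    Real.sin_arcsin (by linarith [Real.sqrt_nonneg t]) (Real.sqrt_le_one.mpr ht1)
  have hc : Real.cos (Real.arcsin (Real.sqrt t)) = Real.sqrt (1 - t) := by
    rw [Real.cos_arcsin, Real.sq_sqrt ht0]
  set c : ℝ := if 0 ≤ K then (1 : ℝ) else -1 with hcdef
  have hθs : Real.sin θmax = c * Real.sqrt t := by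
    show Real.sin (c * Real.arcsin (Real.sqrt ((gmax - H) / (2 * gmax - H - J)))) = _
    rw [ht]
    rcases eq_or_ne c 1 with hc1 | hc1
    · rw [hc1, one_mul, one_mul, hs]
    · have hcm : c = -1 := by
        rw [hcdef]; split_ifs with hk
        · exfalso; apply hc1; rw [hcdef, if_pos hk]
        · rfl
      rw [hcm, neg_one_mul, neg_one_mul, Real.sin_neg, hs]
  have hθc : Real.cos θmax = Real.sqrt (1 - t) := by
    show Real.cos (c * Real.arcsin (Real.sqrt ((gmax - H) / (2 * gmax - H - J)))) = _
    rw [ht]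
    rcases eq_or_ne c 1 with hc1 | hc1
    · rw [hc1, one_mul, hc]
    · have : c = -1 := by
        rw [hcdef]; split_ifs with hk
        · exfalso; apply hc1; rw [hcdef, if_pos hk]
        · rfl
      rw [this, neg_one_mul, Real.cos_neg, hc]
  have hprod : Real.sqrt (1 - t) * Real.sqrt t = |K| / D := by
    rw [← Real.sqrt_mul h1t]
    have key : (D + H - J) * (D + J - H) = 4 * K ^ 2 := by linear_combination hD2
    have h1t' : 1 - t = (D + H - J) / (2 * D) := by
      rw [htdef]; field_simp; ring
    have heq : (1 - t) * t = (K / D) ^ 2 := by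
      rw [h1t', htdef, div_mul_div_comm, key, div_pow]
      field_simp
      ring
    rw [heq, Real.sqrt_sq_eq_abs, abs_div, abs_of_pos hDpos]
  have hcK : c * |K| = K := by
    rw [hcdef]; split_ifs with hk
    · rw [one_mul, abs_of_nonneg hk]
    · rw [neg_one_mul, abs_of_neg (lt_of_not_ge hk)]; ring
  rw [hθs, hθc]
  have e1 : Real.sqrt (1 - t) ^ 2 = 1 - t := Real.sq_sqrt h1t
  have e2 : (c * Real.sqrt t) ^ 2 = t := by
    have : c ^ 2 = 1 := by rw [hcdef]; split_ifs <;> norm_num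
    rw [mul_pow, this, one_mul, Real.sq_sqrt ht0]
  have e3 : 2 * K * Real.sqrt (1 - t) * (c * Real.sqrt t) = 2 * K * K / D := by
    rw [show 2 * K * Real.sqrt (1 - t) * (c * Real.sqrt t)
        = 2 * K * (Real.sqrt (1 - t) * Real.sqrt t) * c by ring, hprod]
    rw [show 2 * K * (|K| / D) * c = 2 * K * (c * |K|) / D by ring, hcK]
  rw [e1, e2, e3, htdef]
  show H * (1 - (D + J - H) / (2 * D)) + 2 * K * K / D + J * ((D + J - H) / (2 * D))
      = (H + J + D) / 2
  field_simp
  linear_combination (-1 : ℝ) * hD2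
end

section
/- Inversion theorem for the two-sided quaternion Fourier transform: if f : ℝ² → ℍ is continuous and integrable and its two-sided quaternion Fourier transform F[f] is integrable, then for every (x1, x2) ∈ ℝ², (1/(2π)) ∫_{ℝ²} exp(i·w1·x1) · F[f](w1,w2) · exp(j·w2·x2) dw1 dw2 = f(x1, x2). -/
open MeasureTheory Real Filter
open scoped Quaternion ENNReal

noncomputable def cq (z : ℂ) : ℍ[ℝ] := ⟨z.re, z.im, 0, 0⟩
noncomputable def pP (q : ℍ[ℝ]) : ℂ := ⟨(q.re + q.imK)/2, (q.imI - q.imJ)/2⟩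
noncomputable def pM (q : ℍ[ℝ]) : ℂ := ⟨(q.re - q.imK)/2, (q.imI + q.imJ)/2⟩
noncomputable def eP : ℍ[ℝ] := ⟨1,0,0,1⟩
noncomputable def eM : ℍ[ℝ] := ⟨1,0,0,-1⟩

@[simp] lemma cq_re (z : ℂ) : (cq z).re = z.re := rfl
@[simp] lemma cq_imI (z : ℂ) : (cq z).imI = z.im := rfl
@[simp] lemma cq_imJ (z : ℂ) : (cq z).imJ = 0 := rfl
@[simp] lemma cq_imK (z : ℂ) : (cq z).imK = 0 := rfl
@[simp] lemma eP_re : eP.re = 1 := rfl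
@[simp] lemma eP_imI : eP.imI = 0 := rfl
@[simp] lemma eP_imJ : eP.imJ = 0 := rfl
@[simp] lemma eP_imK : eP.imK = 1 := rfl
@[simp] lemma eM_re : eM.re = 1 := rfl
@[simp] lemma eM_imI : eM.imI = 0 := rfl
@[simp] lemma eM_imJ : eM.imJ = 0 := rfl
@[simp] lemma eM_imK : eM.imK = -1 := rfl
@[simp] lemma expI_re (t : ℝ) : (expI t).re = Real.cos t := rfl
@[simp] lemma expI_imI (t : ℝ) : (expI t).imI = Real.sin t := rfl
@[simp] lemma expI_imJ (t : ℝ) : (expI t).imJ = 0 := rfl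
@[simp] lemma expI_imK (t : ℝ) : (expI t).imK = 0 := rfl
@[simp] lemma expJ_re (t : ℝ) : (expJ t).re = Real.cos t := rfl
@[simp] lemma expJ_imI (t : ℝ) : (expJ t).imI = 0 := rfl
@[simp] lemma expJ_imJ (t : ℝ) : (expJ t).imJ = Real.sin t := rfl
@[simp] lemma expJ_imK (t : ℝ) : (expJ t).imK = 0 := rfl

@[simp] lemma pP_cq_eP (z : ℂ) : pP (cq z * eP) = z := by
  apply Complex.ext <;> simp [pP] <;> ring
@[simp] lemma pP_cq_eM (z : ℂ) : pP (cq z * eM) = 0 := by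
  apply Complex.ext <;> simp [pP]
@[simp] lemma pM_cq_eP (z : ℂ) : pM (cq z * eP) = 0 := by
  apply Complex.ext <;> simp [pM]
@[simp] lemma pM_cq_eM (z : ℂ) : pM (cq z * eM) = z := by
  apply Complex.ext <;> simp [pM] <;> ring

lemma decomp (q : ℍ[ℝ]) : cq (pP q) * eP + cq (pM q) * eM = q := by
  ext <;> simp [pP, pM] <;> ring

@[simp] lemma pP_smul (r : ℝ) (q : ℍ[ℝ]) : pP (r • q) = r • pP q := by
  apply Complex.ext <;> simp [pP, Complex.real_smul] <;> ring
@[simp] lemma pM_smul (r : ℝ) (q : ℍ[ℝ]) : pM (r • q) = r • pM q := by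
  apply Complex.ext <;> simp [pM, Complex.real_smul] <;> ring

noncomputable def TP : ℂ →L[ℝ] ℍ[ℝ] :=
  LinearMap.toContinuousLinearMap
    { toFun := fun z => cq z * eP
      map_add' := by intro a b; ext <;> simp <;> ring
      map_smul' := by intro r a; ext <;> simp <;> ring }

noncomputable def TM : ℂ →L[ℝ] ℍ[ℝ] :=
  LinearMap.toContinuousLinearMap
    { toFun := fun z => cq z * eM
      map_add' := by intro a b; ext <;> simp <;> ring
      map_smul' := by intro r a; ext <;> simp <;> ring }

noncomputable def pPL : ℍ[ℝ] →L[ℝ] ℂ :=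
  LinearMap.toContinuousLinearMap
    { toFun := pP
      map_add' := by intro a b; apply Complex.ext <;> simp [pP] <;> ring
      map_smul' := by intro r a; apply Complex.ext <;> simp [pP] <;> ring }

noncomputable def pML : ℍ[ℝ] →L[ℝ] ℂ :=
  LinearMap.toContinuousLinearMap
    { toFun := pM
      map_add' := by intro a b; apply Complex.ext <;> simp [pM] <;> ring
      map_smul' := by intro r a; apply Complex.ext <;> simp [pM] <;> ring }

@[simp] lemma TP_apply (z : ℂ) : TP z = cq z * eP := rfl
@[simp] lemma TM_apply (z : ℂ) : TM z = cq z * eM := rfl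
@[simp] lemma pPL_apply (q : ℍ[ℝ]) : pPL q = pP q := rfl
@[simp] lemma pML_apply (q : ℍ[ℝ]) : pML q = pM q := rfl

lemma key (α β : ℝ) (q : ℍ[ℝ]) :
    expI α * q * expJ β
      = cq (Complex.exp (↑(α - β) * Complex.I) * pP q) * eP
        + cq (Complex.exp (↑(α + β) * Complex.I) * pM q) * eM := by
  ext <;>
  simp [pP, pM, Complex.exp_ofReal_mul_I_re,
    Complex.exp_ofReal_mul_I_im, Complex.mul_re, Complex.mul_im,
    Real.cos_sub, Real.sin_sub, Real.cos_add, Real.sin_add,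
    -Complex.ofReal_sub, -Complex.ofReal_add] <;>
  ring

lemma integrable_ker {g : ℝ × ℝ → ℂ} (hg : Integrable g) {c : ℝ × ℝ → ℝ}
    (hc : Measurable c) :
    Integrable (fun v => Complex.exp (↑(c v) * Complex.I) * g v) := by
  have hm : AEStronglyMeasurable (fun v => Complex.exp (↑(c v) * Complex.I)) volume :=
    (Complex.measurable_exp.comp ((Complex.measurable_ofReal.comp hc).mul
      measurable_const)).aestronglyMeasurable
  refine (hg.norm).mono' (hm.mul hg.1) ?_
  filter_upwards with v
  simp [Complex.norm_exp_ofReal_mul_I]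

lemma integral_split (g : ℝ × ℝ → ℍ[ℝ]) (hg : Integrable g) (a b : ℝ × ℝ → ℝ)
    (ha : Measurable a) (hb : Measurable b) :
    ∫ v, expI (a v) * g v * expJ (b v)
      = cq (∫ v, Complex.exp (↑(a v - b v) * Complex.I) * pP (g v)) * eP
        + cq (∫ v, Complex.exp (↑(a v + b v) * Complex.I) * pM (g v)) * eM := by
  have hgP : Integrable (fun v => pP (g v)) := pPL.integrable_comp hg
  have hgM : Integrable (fun v => pM (g v)) := pML.integrable_comp hg
  have h1 : Integrable (fun v => Complex.exp (↑(a v - b v) * Complex.I) * pP (g v)) :=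
    integrable_ker hgP (ha.sub hb)
  have h2 : Integrable (fun v => Complex.exp (↑(a v + b v) * Complex.I) * pM (g v)) :=
    integrable_ker hgM (ha.add hb)
  calc ∫ v, expI (a v) * g v * expJ (b v)
      = ∫ v, (TP (Complex.exp (↑(a v - b v) * Complex.I) * pP (g v))
            + TM (Complex.exp (↑(a v + b v) * Complex.I) * pM (g v))) := by
        simp only [TP_apply, TM_apply]
        exact congrArg _ (funext fun v => key _ _ _)
    _ = _ := by
        rw [integral_add (TP.integrable_comp h1) (TM.integrable_comp h2),
          TP.integral_comp_comm h1, TM.integral_comp_comm h2]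
        simp

open scoped FourierTransform RealInnerProductSpace

noncomputable def Gm (z : ℝ × ℝ → ℂ) (w : ℝ × ℝ) : ℂ :=
  ∫ x : ℝ × ℝ, Complex.exp (↑(-(w.1 * x.1) + -(w.2 * x.2)) * Complex.I) * z x

noncomputable def φe : EuclideanSpace ℝ (Fin 2) ≃ᵐ ℝ × ℝ :=
  (MeasurableEquiv.toLp 2 (Fin 2 → ℝ)).symm.trans MeasurableEquiv.finTwoArrow

lemma φe_mp : MeasurePreserving φe volume volume :=
  (MeasureTheory.volume_preserving_finTwoArrow ℝ).comp
    (EuclideanSpace.volume_preserving_symm_measurableEquiv_toLp (Fin 2))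

@[simp] lemma φe_apply (v : EuclideanSpace ℝ (Fin 2)) : φe v = (v 0, v 1) := rfl
@[simp] lemma φe_symm_apply_0 (x : ℝ × ℝ) : φe.symm x 0 = x.1 := rfl
@[simp] lemma φe_symm_apply_1 (x : ℝ × ℝ) : φe.symm x 1 = x.2 := rfl

lemma inner_e (v ξ : EuclideanSpace ℝ (Fin 2)) :
    ⟪v, ξ⟫ = v 0 * ξ 0 + v 1 * ξ 1 := by
  simp [PiLp.inner_apply, Fin.sum_univ_two, RCLike.inner_apply, mul_comm]

lemma continuous_φe : Continuous (φe : EuclideanSpace ℝ (Fin 2) → ℝ × ℝ) := by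
  have h0 := (EuclideanSpace.proj (0 : Fin 2) : EuclideanSpace ℝ (Fin 2) →L[ℝ] ℝ).continuous
  have h1 := (EuclideanSpace.proj (1 : Fin 2) : EuclideanSpace ℝ (Fin 2) →L[ℝ] ℝ).continuous
  exact (h0.prodMk h1 : _)

lemma two_pi_ne : (2 * π : ℝ) ≠ 0 := by positivity

lemma finrank_prod_two : Module.finrank ℝ (ℝ × ℝ) = 2 := by simp

lemma inv_core (z : ℝ × ℝ → ℂ) (hzc : Continuous z) (hzi : Integrable z)
    (hG : Integrable (Gm z)) (p : ℝ × ℝ) :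
    ∫ w : ℝ × ℝ, Complex.exp (↑(w.1 * p.1 + w.2 * p.2) * Complex.I) * Gm z w
      = ((2 * π) ^ 2 : ℝ) • z p := by
  set Z : EuclideanSpace ℝ (Fin 2) → ℂ := fun v => z (φe v) with hZ
  have hZc : Continuous Z := hzc.comp continuous_φe
  have hZi : Integrable Z := (φe_mp.integrable_comp_emb φe.measurableEmbedding).mpr hzi
  have hFZ : ∀ ξ, 𝓕 Z ξ = Gm z ((2 * π) • φe ξ) := by
    intro ξ
    rw [Real.fourier_eq',
      ← (MeasurePreserving.symm φe φe_mp).integral_comp φe.symm.measurableEmbedding]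
    unfold Gm
    refine integral_congr_ae (Eventually.of_forall fun x => ?_)
    simp only [MeasurableEquiv.apply_symm_apply, hZ, inner_e, φe_symm_apply_0,
      φe_symm_apply_1, φe_apply, Prod.smul_fst, Prod.smul_snd, smul_eq_mul]
    congr 2
    push_cast
    ring
  have h1 : Integrable (fun w : ℝ × ℝ => Gm z ((2 * π) • w)) :=
    (MeasureTheory.integrable_comp_smul_iff volume (Gm z) two_pi_ne).mpr hG
  have h𝓕Zi : Integrable (𝓕 Z) := by
    have h2 : Integrable ((fun w : ℝ × ℝ => Gm z ((2 * π) • w)) ∘ φe) :=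
      (φe_mp.integrable_comp_emb φe.measurableEmbedding).mpr h1
    exact h2.congr (Eventually.of_forall fun ξ => (hFZ ξ).symm)
  have hinv : 𝓕⁻ (𝓕 Z) (φe.symm p) = Z (φe.symm p) :=
    hZi.fourierInv_fourier_eq h𝓕Zi hZc.continuousAt
  have hcv : ∫ w : ℝ × ℝ, Complex.exp (↑(w.1 * p.1 + w.2 * p.2) * Complex.I) * Gm z w
      = ((2 * π) ^ 2 : ℝ) • ∫ v : ℝ × ℝ,
          Complex.exp (↑(((2*π) • v).1 * p.1 + ((2*π) • v).2 * p.2) * Complex.I)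
            * Gm z ((2*π) • v) := by
    rw [MeasureTheory.Measure.integral_comp_smul volume
      (fun w : ℝ × ℝ => Complex.exp (↑(w.1 * p.1 + w.2 * p.2) * Complex.I) * Gm z w) (2*π),
      finrank_prod_two, smul_smul]
    rw [abs_of_nonneg (by positivity), mul_inv_cancel₀ (by positivity), one_smul]
  rw [hcv]
  have hlast : ∫ v : ℝ × ℝ,
      Complex.exp (↑(((2*π) • v).1 * p.1 + ((2*π) • v).2 * p.2) * Complex.I)
        * Gm z ((2*π) • v) = 𝓕⁻ (𝓕 Z) (φe.symm p) := by
    rw [Real.fourierInv_eq',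
      ← (MeasurePreserving.symm φe φe_mp).integral_comp φe.symm.measurableEmbedding]
    refine integral_congr_ae (Eventually.of_forall fun v => ?_)
    simp only [hFZ, MeasurableEquiv.apply_symm_apply, inner_e, φe_symm_apply_0, φe_symm_apply_1,
      Prod.smul_fst, Prod.smul_snd, smul_eq_mul]
    congr 2
    push_cast
    ring
  rw [hlast, hinv, hZ]
  simp

@[simp] lemma cq_smul (r : ℝ) (z : ℂ) : cq (r • z) = r • cq z := by
  ext <;> simp [Complex.real_smul]

@[simp] lemma pP_add (a b : ℍ[ℝ]) : pP (a + b) = pP a + pP b := by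
  apply Complex.ext <;> simp [pP] <;> ring
@[simp] lemma pM_add (a b : ℍ[ℝ]) : pM (a + b) = pM a + pM b := by
  apply Complex.ext <;> simp [pM] <;> ring

noncomputable def GP (f : ℝ × ℝ → ℍ[ℝ]) (w : ℝ × ℝ) : ℂ :=
  ∫ x : ℝ × ℝ, Complex.exp (↑(-(w.1 * x.1) - -(w.2 * x.2)) * Complex.I) * pP (f x)

lemma QFT_eq (f : ℝ × ℝ → ℍ[ℝ]) (hf : Integrable f) (w : ℝ × ℝ) :
    QFT f w.1 w.2
      = (1 / (2 * π)) • (cq (GP f w) * eP + cq (Gm (fun x => pM (f x)) w) * eM) := by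
  have h := integral_split f hf (fun x => -(w.1 * x.1)) (fun x => -(w.2 * x.2))
    (by fun_prop) (by fun_prop)
  beta_reduce at h
  unfold QFT GP Gm
  rw [h]

lemma neg_mp : MeasurePreserving (fun w : ℝ × ℝ => (w.1, -w.2)) volume volume := by
  rw [Measure.volume_eq_prod]
  exact (MeasurePreserving.id volume).prod (Measure.measurePreserving_neg volume)

noncomputable def νe : (ℝ × ℝ) ≃ᵐ (ℝ × ℝ) :=
  (MeasurableEquiv.refl ℝ).prodCongr (Homeomorph.neg ℝ).toMeasurableEquiv

@[simp] lemma νe_apply (w : ℝ × ℝ) : νe w = (w.1, -w.2) := rfl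

lemma νe_coe : ⇑νe = fun w : ℝ × ℝ => (w.1, -w.2) := rfl

lemma νe_mp : MeasurePreserving (⇑νe) volume volume := by
  rw [νe_coe]; exact neg_mp

set_option maxHeartbeats 1000000 in
theorem qft_inversion' (f : ℝ × ℝ → ℍ[ℝ]) (hc : Continuous f) (hf : Integrable f)
    (hFf : Integrable (fun w : ℝ × ℝ => QFT f w.1 w.2)) (x : ℝ × ℝ) :
    (1 / (2 * π)) • ∫ w : ℝ × ℝ, expI (w.1 * x.1) * QFT f w.1 w.2 * expJ (w.2 * x.2)
      = f x := by
  set zP : ℝ × ℝ → ℂ := fun y => pP (f y) with hzP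
  set zM : ℝ × ℝ → ℂ := fun y => pM (f y) with hzM
  have hzPc : Continuous zP := pPL.continuous.comp hc
  have hzMc : Continuous zM := pML.continuous.comp hc
  have hzPi : Integrable zP := pPL.integrable_comp hf
  have hzMi : Integrable zM := pML.integrable_comp hf
  have hpP : ∀ w : ℝ × ℝ, pP (QFT f w.1 w.2) = (1 / (2 * π)) • GP f w := by
    intro w; rw [QFT_eq f hf w]; simp
  have hpM : ∀ w : ℝ × ℝ, pM (QFT f w.1 w.2) = (1 / (2 * π)) • Gm zM w := by
    intro w; rw [QFT_eq f hf w]; simp [hzM]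
  have hGP_int : Integrable (GP f) := by
    have h := (pPL.integrable_comp hFf).smul (2 * π : ℝ)
    refine h.congr (Eventually.of_forall fun w => ?_)
    simp only [Pi.smul_apply, pPL_apply]
    rw [hpP w, smul_smul]
    rw [show (2 * π) * (1 / (2 * π)) = 1 by field_simp, one_smul]
  have hGm_int : Integrable (Gm zM) := by
    have h := (pML.integrable_comp hFf).smul (2 * π : ℝ)
    refine h.congr (Eventually.of_forall fun w => ?_)
    simp only [Pi.smul_apply, pML_apply]
    rw [hpM w, smul_smul]
    rw [show (2 * π) * (1 / (2 * π)) = 1 by field_simp, one_smul]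
  have hrel : ∀ w : ℝ × ℝ, GP f w = Gm zP (w.1, -w.2) := by
    intro w; unfold GP Gm
    refine integral_congr_ae (Eventually.of_forall fun v => ?_)
    simp only [hzP]
    congr 2
    push_cast
    ring
  have hGmP_int : Integrable (Gm zP) := by
    have h : Integrable ((GP f) ∘ νe) :=
      (MeasurePreserving.integrable_comp_emb νe_mp νe.measurableEmbedding).mpr hGP_int
    refine h.congr (Eventually.of_forall fun w => ?_)
    simp only [Function.comp_apply, νe_apply]
    rw [hrel (w.1, -w.2)]
    simp
  have hM : ∫ w : ℝ × ℝ, Complex.exp (↑(w.1 * x.1 + w.2 * x.2) * Complex.I) * Gm zM w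
      = ((2 * π) ^ 2 : ℝ) • zM x := inv_core zM hzMc hzMi hGm_int x
  have hP : ∫ w : ℝ × ℝ, Complex.exp (↑(w.1 * x.1 - w.2 * x.2) * Complex.I) * GP f w
      = ((2 * π) ^ 2 : ℝ) • zP x := by
    have step : ∫ w : ℝ × ℝ, Complex.exp (↑(w.1 * x.1 - w.2 * x.2) * Complex.I) * GP f w
        = ∫ w : ℝ × ℝ, Complex.exp (↑(w.1 * x.1 + w.2 * x.2) * Complex.I) * Gm zP w := by
      rw [← MeasurePreserving.integral_comp νe_mp νe.measurableEmbedding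
        (fun w : ℝ × ℝ => Complex.exp (↑(w.1 * x.1 + w.2 * x.2) * Complex.I) * Gm zP w)]
      refine integral_congr_ae (Eventually.of_forall fun w => ?_)
      simp only [νe_apply]
      rw [← hrel w]
      congr 2
      push_cast
      ring
    rw [step]
    exact inv_core zP hzPc hzPi hGmP_int x
  have hsplit := integral_split (fun w => QFT f w.1 w.2) hFf
    (fun w => w.1 * x.1) (fun w => w.2 * x.2) (by fun_prop) (by fun_prop)
  beta_reduce at hsplit
  rw [hsplit]
  simp only [hpP, hpM, mul_smul_comm, integral_smul, hP, hM, smul_smul]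
  rw [show (1 / (2 * π)) * (2 * π) ^ 2 = 2 * π by field_simp]
  simp only [cq_smul, smul_mul_assoc, ← smul_add, smul_smul]
  rw [show (1 / (2 * π)) * (2 * π) = 1 by field_simp, one_smul]
  exact decomp (f x)

/-- Inversion theorem for the two-sided quaternion Fourier transform:
if `f : ℝ² → ℍ` is continuous and integrable and `F[f]` is integrable, then for every
`(x₁,x₂)`, `(1/(2π)) ∫ exp(i w₁ x₁) F[f](w₁,w₂) exp(j w₂ x₂) dw = f(x₁,x₂)`. -/
theorem qft_inversion (f : ℝ × ℝ → ℍ[ℝ]) (hc : Continuous f) (hf : Integrable f)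
    (hFf : Integrable (fun w : ℝ × ℝ => QFT f w.1 w.2)) (x : ℝ × ℝ) :
    (1 / (2 * π)) • ∫ w : ℝ × ℝ, expI (w.1 * x.1) * QFT f w.1 w.2 * expJ (w.2 * x.2)
      = f x :=
  qft_inversion' f hc hf hFf x
end

section
/- Inversion of the discrete two-sided quaternion Fourier transform: let M be a positive integer and f : Fin M × Fin M → ℍ. Define F_D[f](w1,w2) := Σ_{x1=0}^{M−1} Σ_{x2=0}^{M−1} exp(−i·2π·w1·x1/M) · f(x1,x2) · exp(−j·2π·w2·x2/M). Then for all x1, x2 ∈ Fin M, Σ_{w1=0}^{M−1} Σ_{w2=0}^{M−1} exp(i·2π·w1·x1/M) · F_D[f](w1,w2) · exp(j·2π·w2·x2/M) = M² · f(x1, x2). -/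
open MeasureTheory Real Filter
open scoped Quaternion ENNReal

lemma expI_mul_expI (a b : ℝ) : expI a * expI b = expI (a + b) := by
  ext <;> simp only [Quaternion.re_mul, Quaternion.imI_mul, Quaternion.imJ_mul, Quaternion.imK_mul] <;> simp [expI, Real.cos_add, Real.sin_add] <;> ring

lemma expJ_mul_expJ (a b : ℝ) : expJ a * expJ b = expJ (a + b) := by
  ext <;> simp only [Quaternion.re_mul, Quaternion.imI_mul, Quaternion.imJ_mul, Quaternion.imK_mul] <;> simp [expJ, Real.cos_add, Real.sin_add] <;> ring

lemma expI_zero : expI 0 = 1 := by ext <;> simp [expI]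
lemma expJ_zero : expJ 0 = 1 := by ext <;> simp [expJ]

lemma expI_pow (t : ℝ) (n : ℕ) : expI t ^ n = expI (n * t) := by
  induction n with
  | zero => simp [expI_zero]
  | succ n ih => rw [pow_succ, ih, expI_mul_expI]; push_cast; ring_nf

lemma expJ_pow (t : ℝ) (n : ℕ) : expJ t ^ n = expJ (n * t) := by
  induction n with
  | zero => simp [expJ_zero]
  | succ n ih => rw [pow_succ, ih, expJ_mul_expJ]; push_cast; ring_nf

lemma expI_int_two_pi (n : ℤ) : expI ((n : ℝ) * (2 * π)) = 1 := by
  ext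
  · simpa [expI] using Real.cos_int_mul_two_pi n
  · simp only [expI]
    have : ((n : ℝ)) * (2 * π) = ((2 * n : ℤ) : ℝ) * π := by push_cast; ring
    rw [this]
    simpa using Real.sin_int_mul_pi (2 * n)
  · simp [expI]
  · simp [expI]

lemma expJ_int_two_pi (n : ℤ) : expJ ((n : ℝ) * (2 * π)) = 1 := by
  ext
  · simpa [expJ] using Real.cos_int_mul_two_pi n
  · simp [expJ]
  · simp only [expJ]
    have : ((n : ℝ)) * (2 * π) = ((2 * n : ℤ) : ℝ) * π := by push_cast; ring
    rw [this]
    simpa using Real.sin_int_mul_pi (2 * n)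
  · simp [expJ]

lemma not_one_of_cos (M : ℕ) (hM : 0 < M) (a b : Fin M) (hab : ¬ a = b)
    (hcos : Real.cos (2 * π * (((a : ℕ) : ℝ) - ((b : ℕ) : ℝ)) / M) = 1) : False := by
  set t : ℝ := 2 * π * (((a : ℕ) : ℝ) - ((b : ℕ) : ℝ)) / M with ht
  have hM' : (M : ℝ) ≠ 0 := Nat.cast_ne_zero.mpr hM.ne'
  obtain ⟨n, hn⟩ := Real.cos_eq_one_iff t |>.mp hcos
  have h2pi : (2 * π) ≠ 0 := by positivity
  have h3 : t * M = (((a : ℕ) : ℝ) - ((b : ℕ) : ℝ)) * (2 * π) := by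
    rw [ht]; field_simp
  rw [← hn] at h3
  have hreal : (n : ℝ) * M = ((a : ℕ) : ℝ) - ((b : ℕ) : ℝ) := by
    apply mul_right_cancel₀ h2pi
    linear_combination h3
  have hz : n * (M : ℤ) = ((a : ℕ) : ℤ) - ((b : ℕ) : ℤ) := by exact_mod_cast hreal
  have ha := a.isLt; have hb := b.isLt
  have h1 : |((a : ℕ) : ℤ) - ((b : ℕ) : ℤ)| < M := abs_lt.mpr ⟨by omega, by omega⟩
  have h2 : |n| * (M : ℤ) < (M : ℤ) := by
    calc |n| * (M : ℤ) = |n * (M : ℤ)| := by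
          rw [abs_mul, abs_of_nonneg (by positivity : (0:ℤ) ≤ (M:ℤ))]
      _ = |((a : ℕ) : ℤ) - ((b : ℕ) : ℤ)| := by rw [hz]
      _ < M := h1
  have hMZ : (0:ℤ) < (M:ℤ) := by exact_mod_cast hM
  have hn1 : |n| < 1 := by
    by_contra hc
    push_neg at hc
    nlinarith [abs_nonneg n]
  rw [abs_lt] at hn1
  have hn0 : n = 0 := by omega
  rw [hn0] at hz
  simp at hz
  exact hab (Fin.ext (by omega))

lemma MtId (M : ℕ) (hM : 0 < M) (a b : Fin M) :
    (M : ℝ) * (2 * π * (((a : ℕ) : ℝ) - ((b : ℕ) : ℝ)) / M)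
      = ((((a : ℕ) : ℤ) - ((b : ℕ) : ℤ) : ℤ) : ℝ) * (2 * π) := by
  have hM' : (M : ℝ) ≠ 0 := Nat.cast_ne_zero.mpr hM.ne'
  push_cast; field_simp

lemma sum_expI_delta (M : ℕ) (hM : 0 < M) (a b : Fin M) :
    ∑ w : Fin M, expI ((w : ℕ) * (2 * π * (((a : ℕ) : ℝ) - ((b : ℕ) : ℝ)) / M)) =
      if a = b then (M : ℍ[ℝ]) else 0 := by
  set t : ℝ := 2 * π * (((a : ℕ) : ℝ) - ((b : ℕ) : ℝ)) / M with ht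
  by_cases hab : a = b
  · subst hab
    simp [ht, expI_zero]
  · rw [if_neg hab]
    have hne : expI t ≠ 1 := fun h =>
      not_one_of_cos M hM a b hab (congrArg QuaternionAlgebra.re h)
    have hpow : expI t ^ M = 1 := by
      rw [expI_pow, ht, MtId M hM a b, expI_int_two_pi]
    calc ∑ w : Fin M, expI ((w : ℕ) * t)
        = ∑ i ∈ Finset.range M, expI t ^ i := by
          simp only [expI_pow]
          exact Fin.sum_univ_eq_sum_range (fun i => expI ((i : ℝ) * t)) M
      _ = (expI t ^ M - 1) / (expI t - 1) := geom_sum_eq hne M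
      _ = 0 := by rw [hpow]; simp

lemma sum_expJ_delta (M : ℕ) (hM : 0 < M) (a b : Fin M) :
    ∑ w : Fin M, expJ ((w : ℕ) * (2 * π * (((a : ℕ) : ℝ) - ((b : ℕ) : ℝ)) / M)) =
      if a = b then (M : ℍ[ℝ]) else 0 := by
  set t : ℝ := 2 * π * (((a : ℕ) : ℝ) - ((b : ℕ) : ℝ)) / M with ht
  by_cases hab : a = b
  · subst hab
    simp [ht, expJ_zero]
  · rw [if_neg hab]
    have hne : expJ t ≠ 1 := fun h =>
      not_one_of_cos M hM a b hab (congrArg QuaternionAlgebra.re h)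
    have hpow : expJ t ^ M = 1 := by
      rw [expJ_pow, ht, MtId M hM a b, expJ_int_two_pi]
    calc ∑ w : Fin M, expJ ((w : ℕ) * t)
        = ∑ i ∈ Finset.range M, expJ t ^ i := by
          simp only [expJ_pow]
          exact Fin.sum_univ_eq_sum_range (fun i => expJ ((i : ℝ) * t)) M
      _ = (expJ t ^ M - 1) / (expJ t - 1) := geom_sum_eq hne M
      _ = 0 := by rw [hpow]; simp


/-- Inversion of the discrete two-sided quaternion Fourier transform:
for `M > 0`, `f : Fin M × Fin M → ℍ` (curried) and
`F_D[f](w₁,w₂) = Σ_{x₁,x₂} exp(−i 2π w₁ x₁/M) f(x₁,x₂) exp(−j 2π w₂ x₂/M)`, one has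
`Σ_{w₁,w₂} exp(i 2π w₁ x₁/M) F_D[f](w₁,w₂) exp(j 2π w₂ x₂/M) = M² f(x₁,x₂)`. -/
theorem dqft_inversion (M : ℕ) (hM : 0 < M) (f : Fin M → Fin M → ℍ[ℝ])
    (F : Fin M → Fin M → ℍ[ℝ])
    (hF : ∀ w₁ w₂ : Fin M, F w₁ w₂ =
      ∑ x₁ : Fin M, ∑ x₂ : Fin M,
        expI (-(2 * π * (w₁ : ℕ) * (x₁ : ℕ) / M)) * f x₁ x₂ *
          expJ (-(2 * π * (w₂ : ℕ) * (x₂ : ℕ) / M)))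
    (x₁ x₂ : Fin M) :
    ∑ w₁ : Fin M, ∑ w₂ : Fin M,
        expI (2 * π * (w₁ : ℕ) * (x₁ : ℕ) / M) * F w₁ w₂ *
          expJ (2 * π * (w₂ : ℕ) * (x₂ : ℕ) / M)
      = ((M : ℝ) ^ 2) • f x₁ x₂ := by
  have key : ∀ w₁ w₂ : Fin M,
      expI (2 * π * (w₁ : ℕ) * (x₁ : ℕ) / M) * F w₁ w₂ *
          expJ (2 * π * (w₂ : ℕ) * (x₂ : ℕ) / M)
        = ∑ y₁ : Fin M, ∑ y₂ : Fin M,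
            expI ((w₁ : ℕ) * (2 * π * (((x₁ : ℕ) : ℝ) - ((y₁ : ℕ) : ℝ)) / M)) *
              f y₁ y₂ *
              expJ ((w₂ : ℕ) * (2 * π * (((x₂ : ℕ) : ℝ) - ((y₂ : ℕ) : ℝ)) / M)) := by
    intro w₁ w₂
    rw [hF, Finset.mul_sum, Finset.sum_mul]
    refine Finset.sum_congr rfl fun y₁ _ => ?_
    rw [Finset.mul_sum, Finset.sum_mul]
    refine Finset.sum_congr rfl fun y₂ _ => ?_
    have h1 : expI (2 * π * (w₁ : ℕ) * (x₁ : ℕ) / M) *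
        expI (-(2 * π * (w₁ : ℕ) * (y₁ : ℕ) / M)) =
        expI ((w₁ : ℕ) * (2 * π * (((x₁ : ℕ) : ℝ) - ((y₁ : ℕ) : ℝ)) / M)) := by
      rw [expI_mul_expI]; congr 1; push_cast; ring
    have h2 : expJ (-(2 * π * (w₂ : ℕ) * (y₂ : ℕ) / M)) *
        expJ (2 * π * (w₂ : ℕ) * (x₂ : ℕ) / M) =
        expJ ((w₂ : ℕ) * (2 * π * (((x₂ : ℕ) : ℝ) - ((y₂ : ℕ) : ℝ)) / M)) := by
      rw [expJ_mul_expJ]; congr 1; push_cast; ring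
    calc expI (2 * π * (w₁ : ℕ) * (x₁ : ℕ) / M) *
          (expI (-(2 * π * (w₁ : ℕ) * (y₁ : ℕ) / M)) * f y₁ y₂ *
            expJ (-(2 * π * (w₂ : ℕ) * (y₂ : ℕ) / M))) *
          expJ (2 * π * (w₂ : ℕ) * (x₂ : ℕ) / M)
        = (expI (2 * π * (w₁ : ℕ) * (x₁ : ℕ) / M) *
            expI (-(2 * π * (w₁ : ℕ) * (y₁ : ℕ) / M))) * f y₁ y₂ *
            (expJ (-(2 * π * (w₂ : ℕ) * (y₂ : ℕ) / M)) *
              expJ (2 * π * (w₂ : ℕ) * (x₂ : ℕ) / M)) := by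
          simp only [mul_assoc]
      _ = _ := by rw [h1, h2]
  calc ∑ w₁ : Fin M, ∑ w₂ : Fin M,
        expI (2 * π * (w₁ : ℕ) * (x₁ : ℕ) / M) * F w₁ w₂ *
          expJ (2 * π * (w₂ : ℕ) * (x₂ : ℕ) / M)
      = ∑ w₁ : Fin M, ∑ w₂ : Fin M, ∑ y₁ : Fin M, ∑ y₂ : Fin M,
            expI ((w₁ : ℕ) * (2 * π * (((x₁ : ℕ) : ℝ) - ((y₁ : ℕ) : ℝ)) / M)) *
              f y₁ y₂ *
              expJ ((w₂ : ℕ) * (2 * π * (((x₂ : ℕ) : ℝ) - ((y₂ : ℕ) : ℝ)) / M)) := by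
        exact Finset.sum_congr rfl fun w₁ _ => Finset.sum_congr rfl fun w₂ _ => key w₁ w₂
    _ = ∑ w₁ : Fin M, ∑ y₁ : Fin M, ∑ w₂ : Fin M, ∑ y₂ : Fin M,
            expI ((w₁ : ℕ) * (2 * π * (((x₁ : ℕ) : ℝ) - ((y₁ : ℕ) : ℝ)) / M)) *
              f y₁ y₂ *
              expJ ((w₂ : ℕ) * (2 * π * (((x₂ : ℕ) : ℝ) - ((y₂ : ℕ) : ℝ)) / M)) := by
        exact Finset.sum_congr rfl fun w₁ _ => Finset.sum_comm
    _ = ∑ y₁ : Fin M, ∑ w₁ : Fin M, ∑ w₂ : Fin M, ∑ y₂ : Fin M,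
            expI ((w₁ : ℕ) * (2 * π * (((x₁ : ℕ) : ℝ) - ((y₁ : ℕ) : ℝ)) / M)) *
              f y₁ y₂ *
              expJ ((w₂ : ℕ) * (2 * π * (((x₂ : ℕ) : ℝ) - ((y₂ : ℕ) : ℝ)) / M)) :=
        Finset.sum_comm
    _ = ∑ y₁ : Fin M, ∑ w₁ : Fin M, ∑ y₂ : Fin M, ∑ w₂ : Fin M,
            expI ((w₁ : ℕ) * (2 * π * (((x₁ : ℕ) : ℝ) - ((y₁ : ℕ) : ℝ)) / M)) *
              f y₁ y₂ *
              expJ ((w₂ : ℕ) * (2 * π * (((x₂ : ℕ) : ℝ) - ((y₂ : ℕ) : ℝ)) / M)) := by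
        exact Finset.sum_congr rfl fun y₁ _ => Finset.sum_congr rfl fun w₁ _ =>
          Finset.sum_comm
    _ = ∑ y₁ : Fin M, ∑ y₂ : Fin M, ∑ w₁ : Fin M, ∑ w₂ : Fin M,
            expI ((w₁ : ℕ) * (2 * π * (((x₁ : ℕ) : ℝ) - ((y₁ : ℕ) : ℝ)) / M)) *
              f y₁ y₂ *
              expJ ((w₂ : ℕ) * (2 * π * (((x₂ : ℕ) : ℝ) - ((y₂ : ℕ) : ℝ)) / M)) := by
        exact Finset.sum_congr rfl fun y₁ _ => Finset.sum_comm
    _ = ∑ y₁ : Fin M, ∑ y₂ : Fin M,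
          (∑ w₁ : Fin M, expI ((w₁ : ℕ) * (2 * π * (((x₁ : ℕ) : ℝ) - ((y₁ : ℕ) : ℝ)) / M))) *
            f y₁ y₂ *
            (∑ w₂ : Fin M, expJ ((w₂ : ℕ) * (2 * π * (((x₂ : ℕ) : ℝ) - ((y₂ : ℕ) : ℝ)) / M))) := by
        refine Finset.sum_congr rfl fun y₁ _ => Finset.sum_congr rfl fun y₂ _ => ?_
        rw [Finset.sum_mul, Finset.sum_mul]
        exact Finset.sum_congr rfl fun w₁ _ => (Finset.mul_sum _ _ _).symm
    _ = ∑ y₁ : Fin M, ∑ y₂ : Fin M,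
          (if x₁ = y₁ then (M : ℍ[ℝ]) else 0) * f y₁ y₂ *
            (if x₂ = y₂ then (M : ℍ[ℝ]) else 0) := by
        refine Finset.sum_congr rfl fun y₁ _ => Finset.sum_congr rfl fun y₂ _ => ?_
        rw [sum_expI_delta M hM x₁ y₁, sum_expJ_delta M hM x₂ y₂]
    _ = (M : ℍ[ℝ]) * f x₁ x₂ * (M : ℍ[ℝ]) := by
        simp [ite_mul, mul_ite, Finset.sum_ite_eq, Finset.mem_univ]
    _ = ((M : ℝ) ^ 2) • f x₁ x₂ := by
        rw [mul_assoc, ← (Nat.cast_commute M (f x₁ x₂)).eq, ← mul_assoc]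
        rw [show ((M : ℍ[ℝ]) * M) = (((M : ℝ) ^ 2 : ℝ) : ℍ[ℝ]) by push_cast; rw [sq]]
        exact Quaternion.coe_mul_eq_smul _ _
end
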